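/- Let 1/2 ≤ m < 1. Then lim_{K→0⁺} √2 √(log(1/K)) · [(U_{1/K})^{-1}(m) - N^{-1}(m)] = 1. -/

import Mathlib

open Real Set Filter

noncomputable def stdNormalCDF (x : ℝ) : ℝ :=
  (1 / Real.sqrt (2 * Real.pi)) * ∫ y in Set.Iic x, Real.exp (-(y ^ 2) / 2)

noncomputable def U (K x : ℝ) : ℝ :=
  stdNormalCDF x - (1 / (2 * Real.sqrt Real.pi * Real.sqrt (Real.log K))) * Real.exp (-(x ^ 2) / 2)

open MeasureTheory in
lemma gauss_integrable : Integrable (fun y : ℝ => Real.exp (-(y ^ 2) / 2)) := by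
  have h := integrable_exp_neg_mul_sq (b := (1:ℝ)/2) (by norm_num)
  have he : (fun y : ℝ => Real.exp (-(y ^ 2) / 2)) = fun y => Real.exp (-(1/2) * y ^ 2) := by
    funext y; congr 1; ring
  rw [he]; exact h

lemma gauss_cont : Continuous (fun y : ℝ => Real.exp (-(y ^ 2) / 2)) := by
  exact Real.continuous_exp.comp (by continuity)

lemma hasDerivAt_cdf (x : ℝ) :
    HasDerivAt stdNormalCDF ((1 / Real.sqrt (2 * Real.pi)) * Real.exp (-(x ^ 2) / 2)) x := by
  have key : stdNormalCDF = fun z =>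
      (1 / Real.sqrt (2 * Real.pi)) * ((∫ y in Set.Iic (0:ℝ), Real.exp (-(y ^ 2) / 2))
        + ∫ y in (0:ℝ)..z, Real.exp (-(y ^ 2) / 2)) := by
    funext z
    unfold stdNormalCDF
    rw [← intervalIntegral.integral_Iic_sub_Iic gauss_integrable.integrableOn
      gauss_integrable.integrableOn]
    ring
  rw [key]
  have hd : HasDerivAt (fun z => ∫ y in (0:ℝ)..z, Real.exp (-(y ^ 2) / 2))
      (Real.exp (-(x ^ 2) / 2)) x := (gauss_cont.integral_hasStrictDerivAt 0 x).hasDerivAt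
  exact (hd.const_add _).const_mul _

lemma cdf_strictMono : StrictMono stdNormalCDF := by
  apply strictMono_of_deriv_pos
  intro x
  rw [(hasDerivAt_cdf x).deriv]
  have : 0 < Real.sqrt (2 * Real.pi) := Real.sqrt_pos.mpr (by positivity)
  positivity

lemma cdf_zero : stdNormalCDF 0 = 1 / 2 := by
  have htotal : ∫ y : ℝ, Real.exp (-(y ^ 2) / 2) = Real.sqrt (2 * Real.pi) := by
    have h := integral_gaussian (1/2 : ℝ)
    rw [show Real.pi / (1/2 : ℝ) = 2 * Real.pi by ring] at h
    rw [← h]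
    congr 1; funext y; congr 1; ring
  have hsym : ∫ y in Set.Iic (0:ℝ), Real.exp (-(y ^ 2) / 2)
      = ∫ y in Set.Ioi (0:ℝ), Real.exp (-(y ^ 2) / 2) := by
    have h := integral_comp_neg_Iic (c := (0:ℝ))
      (f := fun y => Real.exp (-(y ^ 2) / 2))
    simp only [neg_zero] at h
    rw [show (fun x : ℝ => Real.exp (-((-x) ^ 2) / 2)) = fun x : ℝ => Real.exp (-(x ^ 2) / 2) by
      funext y; congr 1; ring] at h
    exact h
  have hsplit := intervalIntegral.integral_Iic_add_Ioi (b := (0:ℝ))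
    gauss_integrable.integrableOn gauss_integrable.integrableOn
  rw [htotal, ← hsym] at hsplit
  have hIic : ∫ y in Set.Iic (0:ℝ), Real.exp (-(y ^ 2) / 2) = Real.sqrt (2 * Real.pi) / 2 := by
    linarith
  have hpos : 0 < Real.sqrt (2 * Real.pi) := Real.sqrt_pos.mpr (by positivity)
  unfold stdNormalCDF
  rw [hIic]
  field_simp

lemma cdf_slope_bounds {a b : ℝ} (ha : 0 ≤ a) (hab : a ≤ b) :
    (b - a) * ((1 / Real.sqrt (2 * Real.pi)) * Real.exp (-(b ^ 2) / 2))
      ≤ stdNormalCDF b - stdNormalCDF a ∧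
    stdNormalCDF b - stdNormalCDF a
      ≤ (b - a) * ((1 / Real.sqrt (2 * Real.pi)) * Real.exp (-(a ^ 2) / 2)) := by
  have hcont : Continuous stdNormalCDF := by
    have : Differentiable ℝ stdNormalCDF := fun x => (hasDerivAt_cdf x).differentiableAt
    exact this.continuous
  constructor
  · -- lower bound: g x = stdNormalCDF x - x * d is monotone on [a, b]
    set d : ℝ := (1 / Real.sqrt (2 * Real.pi)) * Real.exp (-(b ^ 2) / 2) with hd
    have hmono : MonotoneOn (fun x => stdNormalCDF x - x * d) (Set.Icc a b) := by
      apply monotoneOn_of_deriv_nonneg (convex_Icc a b)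
      · exact (hcont.sub (continuous_id.mul continuous_const)).continuousOn
      · intro x hx
        exact ((hasDerivAt_cdf x).sub (hasDerivAt_mul_const d)).differentiableAt.differentiableWithinAt
      · intro x hx
        rw [interior_Icc] at hx
        rw [show deriv (fun x => stdNormalCDF x - x * d) x = _ from ((hasDerivAt_cdf x).sub (hasDerivAt_mul_const d)).deriv]
        have hx2 : x ^ 2 ≤ b ^ 2 := by nlinarith [hx.1, hx.2]
        have : Real.exp (-(b ^ 2) / 2) ≤ Real.exp (-(x ^ 2) / 2) :=
          Real.exp_le_exp.mpr (by linarith)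
        have hs : 0 < Real.sqrt (2 * Real.pi) := Real.sqrt_pos.mpr (by positivity)
        rw [hd]
        have h1 : (1 / Real.sqrt (2 * Real.pi)) * Real.exp (-(b ^ 2) / 2)
            ≤ (1 / Real.sqrt (2 * Real.pi)) * Real.exp (-(x ^ 2) / 2) := by
          apply mul_le_mul_of_nonneg_left this (by positivity)
        linarith
    have := hmono (Set.left_mem_Icc.mpr hab) (Set.right_mem_Icc.mpr hab) hab
    simp only at this
    nlinarith [this]
  · set e : ℝ := (1 / Real.sqrt (2 * Real.pi)) * Real.exp (-(a ^ 2) / 2) with he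
    have hmono : MonotoneOn (fun x => x * e - stdNormalCDF x) (Set.Icc a b) := by
      apply monotoneOn_of_deriv_nonneg (convex_Icc a b)
      · exact ((continuous_id.mul continuous_const).sub hcont).continuousOn
      · intro x hx
        exact ((hasDerivAt_mul_const e).sub (hasDerivAt_cdf x)).differentiableAt.differentiableWithinAt
      · intro x hx
        rw [interior_Icc] at hx
        rw [show deriv (fun x => x * e - stdNormalCDF x) x = _ from ((hasDerivAt_mul_const e).sub (hasDerivAt_cdf x)).deriv]
        have hx2 : a ^ 2 ≤ x ^ 2 := by nlinarith [hx.1, hx.2]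
        have : Real.exp (-(x ^ 2) / 2) ≤ Real.exp (-(a ^ 2) / 2) :=
          Real.exp_le_exp.mpr (by linarith)
        have hs : 0 < Real.sqrt (2 * Real.pi) := Real.sqrt_pos.mpr (by positivity)
        rw [he]
        have h1 : (1 / Real.sqrt (2 * Real.pi)) * Real.exp (-(x ^ 2) / 2)
            ≤ (1 / Real.sqrt (2 * Real.pi)) * Real.exp (-(a ^ 2) / 2) := by
          apply mul_le_mul_of_nonneg_left this (by positivity)
        linarith
    have := hmono (Set.left_mem_Icc.mpr hab) (Set.right_mem_Icc.mpr hab) hab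
    simp only at this
    nlinarith [this]

/-- for 1/2 ≤ m < 1,
`lim_{K→0⁺} √2 √(log(1/K)) · ((U_{1/K})⁻¹(m) - N⁻¹(m)) = 1`, where `f K = (U_{1/K})⁻¹(m)` and
`A = N⁻¹(m)` are expressed via witnesses. -/
theorem limit_of_inverse_difference (m A : ℝ) (hm₁ : 1 / 2 ≤ m) (hm₂ : m < 1)
    (hA : stdNormalCDF A = m) (f : ℝ → ℝ)
    (hf : ∀ K : ℝ, 0 < K → K < 1 →
      -(Real.sqrt 2 * Real.sqrt (Real.log (1 / K))) ≤ f K ∧ U (1 / K) (f K) = m) :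
    Filter.Tendsto (fun K => Real.sqrt 2 * Real.sqrt (Real.log (1 / K)) * (f K - A))
      (nhdsWithin 0 (Set.Ioi 0)) (nhds 1) := by
  have hπ : 0 < Real.sqrt Real.pi := Real.sqrt_pos.mpr Real.pi_pos
  have h2π : 0 < Real.sqrt (2 * Real.pi) := Real.sqrt_pos.mpr (by positivity)
  have hA0 : 0 ≤ A := by
    have : stdNormalCDF 0 ≤ stdNormalCDF A := by rw [cdf_zero, hA]; exact hm₁
    exact (cdf_strictMono.le_iff_le).mp this
  set c : ℝ → ℝ := fun K => 1 / (2 * Real.sqrt Real.pi * Real.sqrt (Real.log (1 / K))) with hcdef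
  set s : ℝ → ℝ := fun K => Real.sqrt 2 * Real.sqrt (Real.log (1 / K)) with hsdef
  -- key facts for each K in Ioo 0 1
  have main : ∀ K ∈ Set.Ioo (0:ℝ) 1,
      (A ≤ f K ∧ f K ≤ A + c K * Real.sqrt (2 * Real.pi)) ∧
      Real.exp ((A ^ 2 - f K ^ 2) / 2) ≤ s K * (f K - A) ∧
      s K * (f K - A) ≤ 1 := by
    rintro K ⟨hK0, hK1⟩
    have hL : 0 < Real.log (1 / K) := Real.log_pos (by rw [lt_div_iff₀ hK0]; linarith)
    have hsL : 0 < Real.sqrt (Real.log (1 / K)) := Real.sqrt_pos.mpr hL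
    have hc : 0 < c K := by rw [hcdef]; positivity
    have hs : 0 < s K := by rw [hsdef]; positivity
    -- key algebraic identity : s K * (c K * √(2π)) = 1
    have key : s K * (c K * Real.sqrt (2 * Real.pi)) = 1 := by
      rw [hcdef, hsdef]
      simp only []
      rw [Real.sqrt_mul (by norm_num : (0:ℝ) ≤ 2) Real.pi]
      have h2 : Real.sqrt 2 * Real.sqrt 2 = 2 := Real.mul_self_sqrt (by norm_num)
      field_simp
      linear_combination h2
    have heq : stdNormalCDF (f K) = m + c K * Real.exp (-(f K ^ 2) / 2) := by
      have h := (hf K hK0 hK1).2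
      unfold U at h
      rw [hcdef]
      simp only []
      linarith
    have hEb : 0 < Real.exp (-(f K ^ 2) / 2) := Real.exp_pos _
    have hAf : A < f K := by
      apply cdf_strictMono.lt_iff_lt.mp
      rw [hA, heq]
      nlinarith
    obtain ⟨hlow, hup⟩ := cdf_slope_bounds hA0 hAf.le
    have hdiff : stdNormalCDF (f K) - stdNormalCDF A = c K * Real.exp (-(f K ^ 2) / 2) := by
      rw [heq, hA]; ring
    rw [hdiff] at hlow hup
    have hEa : 0 < Real.exp (-(A ^ 2) / 2) := Real.exp_pos _
    -- upper bound: f K - A ≤ c K * √(2π)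
    have hub : f K - A ≤ c K * Real.sqrt (2 * Real.pi) := by
      have h1 : (f K - A) * (1 / Real.sqrt (2 * Real.pi)) ≤ c K := by
        apply le_of_mul_le_mul_right _ hEb
        calc (f K - A) * (1 / Real.sqrt (2 * Real.pi)) * Real.exp (-(f K ^ 2) / 2)
            = (f K - A) * ((1 / Real.sqrt (2 * Real.pi)) * Real.exp (-(f K ^ 2) / 2)) := by ring
          _ ≤ c K * Real.exp (-(f K ^ 2) / 2) := hlow
      have h2 : f K - A = (f K - A) * (1 / Real.sqrt (2 * Real.pi)) * Real.sqrt (2 * Real.pi) := by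
        field_simp
      rw [h2]
      exact mul_le_mul_of_nonneg_right h1 (Real.sqrt_nonneg _)
    refine ⟨⟨hAf.le, by linarith⟩, ?_, ?_⟩
    · -- lower bound for s K * (f K - A)
      have h2 : c K * Real.exp (-(f K ^ 2) / 2)
          / ((1 / Real.sqrt (2 * Real.pi)) * Real.exp (-(A ^ 2) / 2)) ≤ f K - A :=
        (div_le_iff₀ (by positivity)).mpr hup
      have h3 := mul_le_mul_of_nonneg_left h2 hs.le
      have h4 : s K * (c K * Real.exp (-(f K ^ 2) / 2)
          / ((1 / Real.sqrt (2 * Real.pi)) * Real.exp (-(A ^ 2) / 2)))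
          = (s K * (c K * Real.sqrt (2 * Real.pi)))
            * (Real.exp (-(f K ^ 2) / 2) / Real.exp (-(A ^ 2) / 2)) := by
        field_simp
      rw [h4, key, one_mul, ← Real.exp_sub] at h3
      rw [show (A ^ 2 - f K ^ 2) / 2 = -(f K ^ 2) / 2 - -(A ^ 2) / 2 by ring]
      exact h3
    · have h3 := mul_le_mul_of_nonneg_left hub hs.le
      rw [key] at h3
      linarith
  -- filter facts
  set l := nhdsWithin (0:ℝ) (Set.Ioi 0) with hl
  have hmem : ∀ᶠ K in l, K ∈ Set.Ioo (0:ℝ) 1 :=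
    Ioo_mem_nhdsGT_of_mem ⟨le_refl _, one_pos⟩
  -- c K → 0
  have hlog : Tendsto (fun K => Real.log (1 / K)) l atTop := by
    have h1 : Tendsto Real.log l atBot := Real.tendsto_log_nhdsGT_zero
    have h2 : Tendsto (fun K => -Real.log K) l atTop := tendsto_neg_atBot_atTop.comp h1
    apply h2.congr
    intro K
    rw [one_div, Real.log_inv]
  have hsqrtlog : Tendsto (fun K => Real.sqrt (Real.log (1 / K))) l atTop := by
    have hs2 : Tendsto Real.sqrt atTop atTop := by
      apply Filter.tendsto_atTop_atTop.mpr
      intro b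
      exact ⟨b ^ 2, fun a ha => by
        calc b ≤ |b| := le_abs_self b
          _ = Real.sqrt (b ^ 2) := (Real.sqrt_sq_eq_abs b).symm
          _ ≤ Real.sqrt a := Real.sqrt_le_sqrt ha⟩
    exact hs2.comp hlog
  have hcto : Tendsto c l (nhds 0) := by
    have h1 : Tendsto (fun K => 2 * Real.sqrt Real.pi * Real.sqrt (Real.log (1 / K))) l atTop := by
      have := hsqrtlog.const_mul_atTop (show (0:ℝ) < 2 * Real.sqrt Real.pi by positivity)
      exact this
    have := h1.inv_tendsto_atTop
    apply this.congr
    intro K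
    simp [hcdef, one_div]
  -- f K → A
  have hfA : Tendsto f l (nhds A) := by
    have hA' : Tendsto (fun _ : ℝ => A) l (nhds A) := tendsto_const_nhds
    have hAc : Tendsto (fun K => A + c K * Real.sqrt (2 * Real.pi)) l (nhds A) := by
      have := hA'.add (hcto.mul_const (Real.sqrt (2 * Real.pi)))
      simpa only [zero_mul, add_zero] using this
    apply tendsto_of_tendsto_of_tendsto_of_le_of_le' hA' hAc
    · filter_upwards [hmem] with K hK using (main K hK).1.1
    · filter_upwards [hmem] with K hK using (main K hK).1.2
  -- exp((A² - f K²)/2) → 1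
  have hexp : Tendsto (fun K => Real.exp ((A ^ 2 - f K ^ 2) / 2)) l (nhds 1) := by
    have h1 : Tendsto (fun K => (A ^ 2 - f K ^ 2) / 2) l (nhds ((A ^ 2 - A ^ 2) / 2)) :=
      (tendsto_const_nhds.sub (hfA.pow 2)).div_const 2
    have h2 := (Real.continuous_exp.tendsto _).comp h1
    simpa [Function.comp_def] using h2
  apply tendsto_of_tendsto_of_tendsto_of_le_of_le' hexp tendsto_const_nhds
  · filter_upwards [hmem] with K hK using (main K hK).2.1
  · filter_upwards [hmem] with K hK using (main K hK).2.2
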